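/- Let λ > 0, w₀ > 0, d > 0 and θ ∈ [0, π/2). If w̃₀ > 0 satisfies w(d, w̃₀) = w(d, w₀)/cos θ, then for every y ∈ ℝ one has cos θ · I_G(y·cos θ; d, w₀) = I_G(y; d, w̃₀). That is, the power density distribution across a flat surface hit by a Gaussian beam under incidence angle θ equals the power density of an orthogonally incident Gaussian beam emitted from the same distance d but with beam waist radius w̃₀. -/

import Mathlib

open Real

/-- Beamwidth of a Gaussian beam with wavelength `lam` and waist radius `w0`
at propagation distance `z`: `w(z, w₀) = w₀ √(1 + (λ z/(π w₀²))²)`. -/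
noncomputable def beamWidth (lam w0 z : ℝ) : ℝ :=
  w0 * Real.sqrt (1 + (lam * z / (π * w0 ^ 2)) ^ 2)

/-- 2D orthogonal Gaussian power density at radial distance `a`, propagation distance `z`. -/
noncomputable def IG (lam a z w0 : ℝ) : ℝ :=
  (Real.sqrt 2 / (Real.sqrt π * beamWidth lam w0 z)) *
    Real.exp (-2 * a ^ 2 / (beamWidth lam w0 z) ^ 2)

lemma beamWidth_pos (lam w0 z : ℝ) (hw0 : 0 < w0) : 0 < beamWidth lam w0 z := by
  apply mul_pos hw0
  apply Real.sqrt_pos.mpr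
  positivity

/-- Lemma 1 (2D): the power density across a surface hit under incidence angle θ equals that
of an orthogonally incident Gaussian beam from the same distance with waist radius w̃₀
satisfying `w(d, w̃₀) = w(d, w₀)/cos θ`. -/
theorem gaussian_oblique_density_eq_orthogonal (lam w0 d θ tw0 : ℝ)
    (hlam : 0 < lam) (hw0 : 0 < w0) (hd : 0 < d)
    (hθ : θ ∈ Set.Ico 0 (π / 2)) (htw0 : 0 < tw0)
    (hEq : beamWidth lam tw0 d = beamWidth lam w0 d / Real.cos θ) :
    ∀ y : ℝ, Real.cos θ * IG lam (y * Real.cos θ) d w0 = IG lam y d tw0 := by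
  intro y
  have hc : 0 < Real.cos θ :=
    Real.cos_pos_of_mem_Ioo ⟨lt_of_lt_of_le (by linarith [Real.pi_pos]) hθ.1, hθ.2⟩
  have hw : 0 < beamWidth lam w0 d := beamWidth_pos _ _ _ hw0
  unfold IG
  rw [hEq]
  have h1 : -2 * (y * Real.cos θ) ^ 2 / beamWidth lam w0 d ^ 2
      = -2 * y ^ 2 / (beamWidth lam w0 d / Real.cos θ) ^ 2 := by
    field_simp
  rw [h1, ← mul_assoc]
  congr 1
  field_simp
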